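/- Let $1 \le p, q < \infty$ with $p \ge q \ge 2$. Then every block sequence $(f_j)$ of the biparameter Haar system in $H^p(H^q)$ satisfies the lower $p$-estimate with constant $1$: $\|\sum_{j=1}^n f_j\|_{H^p(H^q)} \ge (\sum_{j=1}^n \|f_j\|_{H^p(H^q)}^p)^{1/p}$. -/

import Mathlib

open Finset MeasureTheory

/-- The `L^∞`-normalized Haar function on the dyadic interval `[k/2^n, (k+1)/2^n)`. -/
noncomputable def haar (n k : ℕ) (x : ℝ) : ℝ :=
  if (k : ℝ) / 2 ^ n ≤ x ∧ x < ((k : ℝ) + 1 / 2) / 2 ^ n then 1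
  else if ((k : ℝ) + 1 / 2) / 2 ^ n ≤ x ∧ x < ((k : ℝ) + 1) / 2 ^ n then -1
  else 0

/-- The biparameter Haar function `h_{I,J}(x,y) = h_I(x) h_J(y)`. -/
noncomputable def haar2 (I J : ℕ × ℕ) (x y : ℝ) : ℝ := haar I.1 I.2 x * haar J.1 J.2 y

/-- The `H^p(H^q)` (mixed-norm Hardy space) norm of the finite linear combination
`∑_{IJ ∈ s} a IJ • h_{IJ}` of biparameter Haar functions, given by the square function formula
`(∫₀¹ (∫₀¹ (∑_{IJ ∈ s} a_{IJ}² h_{IJ}²(x,y))^{q/2} dy)^{p/q} dx)^{1/p}`. -/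
noncomputable def HpHqNorm (p q : ℝ) (s : Finset ((ℕ × ℕ) × (ℕ × ℕ)))
    (a : (ℕ × ℕ) × (ℕ × ℕ) → ℝ) : ℝ :=
  (∫ x in Set.Icc (0 : ℝ) 1,
      (∫ y in Set.Icc (0 : ℝ) 1,
        (∑ IJ ∈ s, (a IJ * haar2 IJ.1 IJ.2 x y) ^ 2) ^ (q / 2)) ^ (p / q)) ^ (1 / p)

/- ### Auxiliary lemmas -/

lemma measurable_haar (n k : ℕ) : Measurable (haar n k) := by
  unfold haar
  refine Measurable.ite ?_ measurable_const
    (Measurable.ite ?_ measurable_const measurable_const) <;>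
    exact measurableSet_Ico

lemma abs_haar_le_one (n k : ℕ) (x : ℝ) : |haar n k x| ≤ 1 := by
  unfold haar; split_ifs <;> norm_num

lemma abs_haar2_le_one (I J : ℕ × ℕ) (x y : ℝ) : |haar2 I J x y| ≤ 1 := by
  rw [haar2, abs_mul]
  exact mul_le_one₀ (abs_haar_le_one _ _ _) (abs_nonneg _) (abs_haar_le_one _ _ _)

lemma haar2_term_sq_le (c : ℝ) (I J : ℕ × ℕ) (x y : ℝ) :
    (c * haar2 I J x y) ^ 2 ≤ c ^ 2 := by
  have h1 : (haar2 I J x y) ^ 2 ≤ 1 := by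
    have := abs_haar2_le_one I J x y
    nlinarith [abs_nonneg (haar2 I J x y), sq_abs (haar2 I J x y)]
  nlinarith [sq_nonneg c]

lemma my_rpow_superadd {x y r : ℝ} (hx : 0 ≤ x) (hy : 0 ≤ y) (hr : 1 ≤ r) :
    x ^ r + y ^ r ≤ (x + y) ^ r := by
  have h := NNReal.coe_le_coe.mpr (NNReal.add_rpow_le_rpow_add x.toNNReal y.toNNReal hr)
  simpa [NNReal.coe_rpow, Real.coe_toNNReal x hx, Real.coe_toNNReal y hy,
    Real.toNNReal_add hx hy] using h

lemma my_sum_rpow_le {ι : Type*} (t : Finset ι) (f : ι → ℝ) (hf : ∀ i, 0 ≤ f i)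
    {r : ℝ} (hr : 1 ≤ r) : ∑ i ∈ t, f i ^ r ≤ (∑ i ∈ t, f i) ^ r := by
  classical
  induction t using Finset.induction_on with
  | empty => simp [Real.zero_rpow (by linarith : r ≠ 0)]
  | @insert a t ha ih =>
    rw [Finset.sum_insert ha, Finset.sum_insert ha]
    calc f a ^ r + ∑ i ∈ t, f i ^ r
        ≤ f a ^ r + (∑ i ∈ t, f i) ^ r := by linarith
      _ ≤ (f a + ∑ i ∈ t, f i) ^ r :=
          my_rpow_superadd (hf a) (Finset.sum_nonneg fun i _ => hf i) hr

lemma my_integrableOn {f : ℝ → ℝ} (hm : Measurable f) {C : ℝ} (hC : ∀ x, |f x| ≤ C) :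
    IntegrableOn f (Set.Icc (0 : ℝ) 1) := by
  refine Integrable.mono' (g := fun _ => C) ((integrableOn_const_iff).mpr (Or.inr ?_))
    hm.aestronglyMeasurable (Filter.Eventually.of_forall fun x => ?_)
  · exact measure_Icc_lt_top
  · simpa [Real.norm_eq_abs] using hC x

lemma inner_measurable {H : ℝ → ℝ → ℝ} (hm : Measurable fun z : ℝ × ℝ => H z.1 z.2)
    (r : ℝ) (x : ℝ) : Measurable fun y => H x y ^ r := by
  have h1 : Measurable fun y : ℝ => H x y :=
    hm.comp (measurable_const.prodMk measurable_id)
  fun_prop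

lemma inner_integrableOn {H : ℝ → ℝ → ℝ} (hm : Measurable fun z : ℝ × ℝ => H z.1 z.2)
    (h0 : ∀ x y, 0 ≤ H x y) {D : ℝ} (hD : ∀ x y, H x y ≤ D) {r : ℝ} (hr : 0 ≤ r) (x : ℝ) :
    IntegrableOn (fun y => H x y ^ r) (Set.Icc (0 : ℝ) 1) := by
  refine my_integrableOn (inner_measurable hm r x) (C := D ^ r) fun y => ?_
  rw [abs_of_nonneg (Real.rpow_nonneg (h0 x y) r)]
  exact Real.rpow_le_rpow (h0 x y) (hD x y) hr

lemma inner_integral_nonneg {H : ℝ → ℝ → ℝ} (h0 : ∀ x y, 0 ≤ H x y) (r : ℝ) (x : ℝ) :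
    0 ≤ ∫ y in Set.Icc (0 : ℝ) 1, H x y ^ r :=
  integral_nonneg fun y => Real.rpow_nonneg (h0 x y) r

lemma inner_integral_le {H : ℝ → ℝ → ℝ} (hm : Measurable fun z : ℝ × ℝ => H z.1 z.2)
    (h0 : ∀ x y, 0 ≤ H x y) {D : ℝ} (hD : ∀ x y, H x y ≤ D) {r : ℝ} (hr : 0 ≤ r) (x : ℝ) :
    (∫ y in Set.Icc (0 : ℝ) 1, H x y ^ r) ≤ D ^ r := by
  calc (∫ y in Set.Icc (0 : ℝ) 1, H x y ^ r)
      ≤ ∫ _ in Set.Icc (0 : ℝ) 1, D ^ r := by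
        refine integral_mono (inner_integrableOn hm h0 hD hr x)
          ((integrableOn_const_iff).mpr (Or.inr measure_Icc_lt_top)) fun y => ?_
        exact Real.rpow_le_rpow (h0 x y) (hD x y) hr
    _ = D ^ r := by simp [Real.volume_Icc]

lemma outer_measurable {H : ℝ → ℝ → ℝ} (hm : Measurable fun z : ℝ × ℝ => H z.1 z.2)
    (r : ℝ) : Measurable fun x => ∫ y in Set.Icc (0 : ℝ) 1, H x y ^ r := by
  have h1 : Measurable fun z : ℝ × ℝ => H z.1 z.2 ^ r := by fun_prop
  exact (h1.stronglyMeasurable.integral_prod_right').measurable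

lemma outer_integrableOn {H : ℝ → ℝ → ℝ} (hm : Measurable fun z : ℝ × ℝ => H z.1 z.2)
    (h0 : ∀ x y, 0 ≤ H x y) {D : ℝ} (hD : ∀ x y, H x y ≤ D)
    {r r' : ℝ} (hr : 0 ≤ r) (hr' : 0 ≤ r') :
    IntegrableOn (fun x => (∫ y in Set.Icc (0 : ℝ) 1, H x y ^ r) ^ r')
      (Set.Icc (0 : ℝ) 1) := by
  have hmeas : Measurable fun x => (∫ y in Set.Icc (0 : ℝ) 1, H x y ^ r) ^ r' := by
    have := outer_measurable hm r
    fun_prop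
  refine my_integrableOn hmeas (C := (D ^ r) ^ r') fun x => ?_
  rw [abs_of_nonneg (Real.rpow_nonneg (inner_integral_nonneg h0 r x) r')]
  exact Real.rpow_le_rpow (inner_integral_nonneg h0 r x)
    (inner_integral_le hm h0 hD hr x) hr'

/-- The key inequality: lower `p`-estimate at the level of the `p`-th powers. -/
lemma key_ineq {p q : ℝ} (hq2 : 1 ≤ q / 2) (hpq1 : 1 ≤ p / q) {n : ℕ}
    (G : Fin n → ℝ → ℝ → ℝ)
    (hGm : ∀ j, Measurable fun z : ℝ × ℝ => G j z.1 z.2)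
    (hG0 : ∀ j x y, 0 ≤ G j x y)
    (C : Fin n → ℝ) (hGC : ∀ j x y, G j x y ≤ C j) :
    ∑ j, ∫ x in Set.Icc (0 : ℝ) 1,
        (∫ y in Set.Icc (0 : ℝ) 1, G j x y ^ (q / 2)) ^ (p / q)
      ≤ ∫ x in Set.Icc (0 : ℝ) 1,
          (∫ y in Set.Icc (0 : ℝ) 1, (∑ j, G j x y) ^ (q / 2)) ^ (p / q) := by
  have hq2' : (0 : ℝ) ≤ q / 2 := by linarith
  have hpq' : (0 : ℝ) ≤ p / q := by linarith
  have hTm : Measurable fun z : ℝ × ℝ => ∑ j, G j z.1 z.2 :=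
    Finset.measurable_sum _ fun j _ => hGm j
  have hT0 : ∀ x y, 0 ≤ ∑ j, G j x y := fun x y => Finset.sum_nonneg fun j _ => hG0 j x y
  have hTC : ∀ x y, (∑ j, G j x y) ≤ ∑ j, C j := fun x y =>
    Finset.sum_le_sum fun j _ => hGC j x y
  -- Step A : for each x, ∑ j (inner j) ≤ inner of the sum
  have stepA : ∀ x, ∑ j, (∫ y in Set.Icc (0 : ℝ) 1, G j x y ^ (q / 2))
      ≤ ∫ y in Set.Icc (0 : ℝ) 1, (∑ j, G j x y) ^ (q / 2) := by
    intro x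
    rw [← integral_finset_sum _ fun j _ => inner_integrableOn (hGm j) (hG0 j) (hGC j) hq2' x]
    refine integral_mono ?_ (inner_integrableOn hTm hT0 hTC hq2' x) fun y => ?_
    · exact integrable_finset_sum _ fun j _ =>
        inner_integrableOn (hGm j) (hG0 j) (hGC j) hq2' x
    · exact my_sum_rpow_le _ _ (fun j => hG0 j x y) hq2
  -- Step B : pointwise in x
  have stepB : ∀ x, ∑ j, (∫ y in Set.Icc (0 : ℝ) 1, G j x y ^ (q / 2)) ^ (p / q)
      ≤ (∫ y in Set.Icc (0 : ℝ) 1, (∑ j, G j x y) ^ (q / 2)) ^ (p / q) := by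
    intro x
    calc ∑ j, (∫ y in Set.Icc (0 : ℝ) 1, G j x y ^ (q / 2)) ^ (p / q)
        ≤ (∑ j, ∫ y in Set.Icc (0 : ℝ) 1, G j x y ^ (q / 2)) ^ (p / q) :=
          my_sum_rpow_le _ _ (fun j => inner_integral_nonneg (hG0 j) _ x) hpq1
      _ ≤ (∫ y in Set.Icc (0 : ℝ) 1, (∑ j, G j x y) ^ (q / 2)) ^ (p / q) :=
          Real.rpow_le_rpow (Finset.sum_nonneg fun j _ =>
            inner_integral_nonneg (hG0 j) _ x) (stepA x) hpq'
  -- Step C : integrate in x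
  rw [← integral_finset_sum _ fun j _ =>
    outer_integrableOn (hGm j) (hG0 j) (hGC j) hq2' hpq']
  refine integral_mono ?_ (outer_integrableOn hTm hT0 hTC hq2' hpq') fun x => stepB x
  exact integrable_finset_sum _ fun j _ =>
    outer_integrableOn (hGm j) (hG0 j) (hGC j) hq2' hpq'

set_option maxHeartbeats 2000000 in
/-- Lower `p`-estimate with constant 1 for block sequences (disjoint Haar spectra)
in `H^p(H^q)`, `p ≥ q ≥ 2`. -/
theorem lower_p_estimate_HpHq_of_two_le_q (p q : ℝ) (hq : 2 ≤ q) (hpq : q ≤ p)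
    (n : ℕ) (s : Fin n → Finset ((ℕ × ℕ) × (ℕ × ℕ)))
    (a : Fin n → (ℕ × ℕ) × (ℕ × ℕ) → ℝ)
    (hdisj : ∀ i j, i ≠ j → Disjoint (s i) (s j))
    (hnonzero : ∀ j, ∃ IJ ∈ s j, a j IJ ≠ 0) :
    (∑ j, HpHqNorm p q (s j) (a j) ^ p) ^ (1 / p)
      ≤ HpHqNorm p q (Finset.univ.biUnion s)
          (fun IJ => ∑ j, if IJ ∈ s j then a j IJ else 0) := by
  classical
  have hq0 : (0 : ℝ) < q := by linarith
  have hp0 : (0 : ℝ) < p := by linarith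
  have hq2 : (1 : ℝ) ≤ q / 2 := by linarith
  have hpq1 : (1 : ℝ) ≤ p / q := (one_le_div hq0).mpr hpq
  -- the square functions of the blocks
  set G : Fin n → ℝ → ℝ → ℝ :=
    fun j x y => ∑ IJ ∈ s j, (a j IJ * haar2 IJ.1 IJ.2 x y) ^ 2 with hGdef
  have hGm : ∀ j, Measurable fun z : ℝ × ℝ => G j z.1 z.2 := by
    intro j
    refine Finset.measurable_sum _ fun IJ _ => ?_
    have hx := (measurable_haar IJ.1.1 IJ.1.2).comp (measurable_fst : Measurable fun z : ℝ × ℝ => z.1)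
    have hy := (measurable_haar IJ.2.1 IJ.2.2).comp (measurable_snd : Measurable fun z : ℝ × ℝ => z.2)
    simp only [haar2]
    exact (measurable_const.mul (hx.mul hy)).pow_const 2
  have hG0 : ∀ j x y, 0 ≤ G j x y := fun j x y => Finset.sum_nonneg fun IJ _ => sq_nonneg _
  have hGC : ∀ j x y, G j x y ≤ ∑ IJ ∈ s j, (a j IJ) ^ 2 := fun j x y =>
    Finset.sum_le_sum fun IJ _ => haar2_term_sq_le _ _ _ _ _
  -- identification of the combined square function
  have hbU : ∀ x y,
      (∑ IJ ∈ Finset.univ.biUnion s,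
        ((∑ j, if IJ ∈ s j then a j IJ else 0) * haar2 IJ.1 IJ.2 x y) ^ 2)
      = ∑ j, G j x y := by
    intro x y
    rw [Finset.sum_biUnion (fun i _ j _ hij => hdisj i j hij)]
    refine Finset.sum_congr rfl fun j _ => Finset.sum_congr rfl fun IJ hIJ => ?_
    have hcoef : (∑ i, if IJ ∈ s i then a i IJ else 0) = a j IJ := by
      rw [Finset.sum_eq_single j]
      · rw [if_pos hIJ]
      · intro i _ hij
        rw [if_neg]
        exact fun h => (Finset.disjoint_left.mp (hdisj i j hij) h) hIJ
      · intro h; exact absurd (Finset.mem_univ j) h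
    rw [hcoef]
  simp only [HpHqNorm]
  have key := key_ineq (p := p) (q := q) hq2 hpq1 G hGm hG0 _ hGC
  -- nonnegativity of the `p`-th powers
  have hX : ∀ j, 0 ≤ ∫ x in Set.Icc (0 : ℝ) 1,
      (∫ y in Set.Icc (0 : ℝ) 1, G j x y ^ (q / 2)) ^ (p / q) :=
    fun j => integral_nonneg fun x =>
      Real.rpow_nonneg (inner_integral_nonneg (hG0 j) _ x) _
  have hcollapse : ∀ j : Fin n,
      ((∫ x in Set.Icc (0 : ℝ) 1,
        (∫ y in Set.Icc (0 : ℝ) 1, G j x y ^ (q / 2)) ^ (p / q)) ^ (1 / p)) ^ p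
      = ∫ x in Set.Icc (0 : ℝ) 1,
        (∫ y in Set.Icc (0 : ℝ) 1, G j x y ^ (q / 2)) ^ (p / q) := by
    intro j
    rw [← Real.rpow_mul (hX j), one_div_mul_cancel hp0.ne', Real.rpow_one]
  have hRHS : (∫ x in Set.Icc (0 : ℝ) 1,
      (∫ y in Set.Icc (0 : ℝ) 1,
        (∑ IJ ∈ Finset.univ.biUnion s,
          ((∑ j, if IJ ∈ s j then a j IJ else 0) * haar2 IJ.1 IJ.2 x y) ^ 2) ^ (q / 2)) ^ (p / q))
      = ∫ x in Set.Icc (0 : ℝ) 1,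
        (∫ y in Set.Icc (0 : ℝ) 1, (∑ j, G j x y) ^ (q / 2)) ^ (p / q) := by
    simp only [hbU]
  calc (∑ j, ((∫ x in Set.Icc (0 : ℝ) 1,
          (∫ y in Set.Icc (0 : ℝ) 1, G j x y ^ (q / 2)) ^ (p / q)) ^ (1 / p)) ^ p) ^ (1 / p)
      = (∑ j, ∫ x in Set.Icc (0 : ℝ) 1,
          (∫ y in Set.Icc (0 : ℝ) 1, G j x y ^ (q / 2)) ^ (p / q)) ^ (1 / p) := by
        rw [Finset.sum_congr rfl fun j _ => hcollapse j]
    _ ≤ (∫ x in Set.Icc (0 : ℝ) 1,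
          (∫ y in Set.Icc (0 : ℝ) 1, (∑ j, G j x y) ^ (q / 2)) ^ (p / q)) ^ (1 / p) :=
        Real.rpow_le_rpow (Finset.sum_nonneg fun j _ => hX j) key (by positivity)
    _ = (∫ x in Set.Icc (0 : ℝ) 1,
          (∫ y in Set.Icc (0 : ℝ) 1,
            (∑ IJ ∈ Finset.univ.biUnion s,
              ((∑ j, if IJ ∈ s j then a j IJ else 0) * haar2 IJ.1 IJ.2 x y) ^ 2) ^ (q / 2)) ^ (p / q)) ^ (1 / p) := by
        rw [hRHS]
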